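/- Let k be a field of characteristic zero and let A = k[x₁, x₂, x₃, …] be the polynomial algebra in countably many variables x_i indexed by the positive integers (the symmetric algebra of the positive Witt algebra W₊), equipped with a bracket {-,-} : A × A → A that is k-bilinear, antisymmetric, satisfies the Jacobi identity, is a derivation in each argument, and satisfies {x_i, x_j} = (j − i)·x_{i+j} for all i, j ≥ 1. Then A satisfies the ACC on radical Poisson ideals. -/

import Mathlib

/-- `B` is a Poisson bracket on the commutative `k`-algebra `A`: it is `k`-bilinear
(additivity and `k`-homogeneity in the first argument, together with antisymmetry, give
bilinearity), antisymmetric, satisfies the Jacobi identity, and is a derivation in each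
argument. -/
def IsPoissonBracket (k : Type*) {A : Type*} [CommRing k] [CommRing A] [Algebra k A]
    (B : A → A → A) : Prop :=
  (∀ a b c : A, B (a + b) c = B a c + B b c) ∧
  (∀ (r : k) (a b : A), B (r • a) b = r • B a b) ∧
  (∀ a b : A, B a b = - B b a) ∧
  (∀ a b c : A, B a (B b c) + B b (B c a) + B c (B a b) = 0) ∧
  (∀ a b c : A, B a (b * c) = B a b * c + b * B a c)

/-- An ideal `I` is a Poisson ideal for the bracket `B` if `{A, I} ⊆ I`. -/
def IsPoissonIdeal {A : Type*} [CommRing A] (B : A → A → A) (I : Ideal A) : Prop :=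
  ∀ x : A, ∀ y ∈ I, B x y ∈ I

/-- `A` satisfies the ascending chain condition on radical Poisson ideals. -/
def PoissonRadicalACC {A : Type*} [CommRing A] (B : A → A → A) : Prop :=
  ∀ c : ℕ → Ideal A, (∀ n, IsPoissonIdeal B (c n)) → (∀ n, (c n).IsRadical) →
    Monotone c → ∃ N, ∀ n, N ≤ n → c n = c N

open MvPolynomial

set_option linter.unusedSectionVars false

section PC

variable {k A : Type*} [CommRing k] [CommRing A] [Algebra k A]
variable (B : A → A → A)

/-- radical Poisson ideal -/
def RP (I : Ideal A) : Prop := IsPoissonIdeal B I ∧ I.IsRadical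

/-- The radical Poisson ideal generated by a set. -/
def pc (S : Set A) : Ideal A := sInf {I | RP B I ∧ S ⊆ I}

lemma RP_top : RP B (⊤ : Ideal A) :=
  ⟨fun _ _ _ => trivial, fun _ _ => trivial⟩

lemma RP_pc (S : Set A) : RP B (pc B S) := by
  constructor
  · intro x y hy
    rw [pc, Ideal.mem_sInf] at *
    intro I hI
    exact hI.1.1 x y (hy hI)
  · intro x ⟨n, hx⟩
    rw [pc, Ideal.mem_sInf] at *
    intro I hI
    exact hI.1.2 ⟨n, hx hI⟩

lemma subset_pc (S : Set A) : S ⊆ ↑(pc B S) := by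
  intro x hx
  rw [SetLike.mem_coe, pc, Ideal.mem_sInf]
  exact fun I hI => hI.2 hx

lemma pc_le {S : Set A} {I : Ideal A} (hI : RP B I) (hS : S ⊆ I) : pc B S ≤ I :=
  sInf_le ⟨hI, hS⟩

lemma pc_mono {S T : Set A} (h : S ⊆ T) : pc B S ≤ pc B T :=
  pc_le B (RP_pc B T) (h.trans (subset_pc B T))

lemma pc_eq_self {I : Ideal A} (hI : RP B I) : pc B ↑I = I :=
  le_antisymm (pc_le B hI subset_rfl) (subset_pc B _)

lemma mem_pc_sq {S : Set A} {x : A} (h : x * x ∈ pc B S) : x ∈ pc B S := by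
  refine (RP_pc B S).2 ⟨2, ?_⟩
  rwa [pow_two]

variable (hB : IsPoissonBracket k B)
include hB

lemma b_add_right (a x y : A) : B a (x + y) = B a x + B a y := by
  obtain ⟨hadd, _, hskew, _, _⟩ := hB
  rw [hskew a (x+y), hadd, hskew x a, hskew y a]
  ring

lemma b_zero_right (a : A) : B a 0 = 0 := by
  have h := b_add_right B hB a 0 0
  rw [add_zero] at h
  have := congrArg (fun t => t - B a 0) h
  simpa using this.symm

lemma pc_mul (a : A) {S : Set A} {x : A} (hx : x ∈ pc B S) :
    a * x ∈ pc B ((a * ·) '' S) := by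
  obtain ⟨hadd, hsmul, hskew, hjac, hleib⟩ := hB
  -- the ideal J = {x | a * x ∈ pc (a*S)}
  set T : Ideal A := pc B ((a * ·) '' S) with hT
  let J : Ideal A := Submodule.comap (LinearMap.mulLeft A a) T
  have hmemJ : ∀ y : A, y ∈ J ↔ a * y ∈ T := fun y => Iff.rfl
  have hJrp : RP B J := by
    constructor
    · -- Poisson
      intro c y hy
      rw [hmemJ] at hy ⊢
      -- B c (a*y) = B c a * y + a * B c y ∈ T
      have h1 : B c (a * y) ∈ T := (RP_pc B _).1 c _ hy
      have h2 : a * B c (a * y) ∈ T := Ideal.mul_mem_left _ _ h1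
      have h3 : B c (a * y) = B c a * y + a * B c y := hleib c a y
      have h4 : a * (B c a * y) = B c a * (a * y) := by ring
      have h5 : B c a * (a * y) ∈ T := Ideal.mul_mem_left _ _ hy
      have h6 : a * (a * B c y) ∈ T := by
        have : a * (a * B c y) = a * B c (a * y) - B c a * (a * y) := by
          rw [h3]; ring
        rw [this]; exact Submodule.sub_mem _ h2 h5
      -- (a * B c y)^2 = (a*(a*B c y)) * B c y ∈ T
      refine (RP_pc B _).2 ⟨2, ?_⟩
      have : (a * B c y) ^ 2 = (a * (a * B c y)) * B c y := by ring
      rw [this]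
      exact Ideal.mul_mem_right _ _ h6
    · -- radical
      intro y ⟨n, hy⟩
      rw [hmemJ] at hy ⊢
      rcases n with _ | n
      · -- y^0 = 1 ∈ J : a * 1 = a ∈ T, then a * y ∈ T
        simp only [pow_zero, mul_one] at hy
        exact Ideal.mul_mem_right _ _ hy
      · -- (a*y)^(n+1) = a^n * (a * y^(n+1))
        refine (RP_pc B _).2 ⟨n+1, ?_⟩
        have : (a * y) ^ (n+1) = a ^ n * (a * y ^ (n+1)) := by ring
        rw [this]
        exact Ideal.mul_mem_left _ _ hy
  have hSJ : S ⊆ ↑J := by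
    intro s hs
    rw [SetLike.mem_coe, hmemJ]
    exact subset_pc B _ ⟨s, hs, rfl⟩
  exact pc_le B hJrp hSJ hx

lemma pc_mul_mem {S T : Set A} {u v : A} (hu : u ∈ pc B S) (hv : v ∈ pc B T) :
    u * v ∈ pc B (Set.image2 (· * ·) S T) := by
  have h1 : u * v = v * u := mul_comm u v
  have h2 : v * u ∈ pc B ((v * ·) '' S) := pc_mul B hB v hu
  rw [h1]
  refine pc_le B (RP_pc B _) ?_ h2
  intro x ⟨s, hs, hx⟩
  subst hx
  rw [SetLike.mem_coe]
  have h3 : s * v ∈ pc B ((s * ·) '' T) := pc_mul B hB s hv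
  have h4 : pc B ((s * ·) '' T) ≤ pc B (Set.image2 (· * ·) S T) := by
    refine pc_mono B ?_
    rintro y ⟨t, ht, rfl⟩
    exact ⟨s, hs, t, ht, rfl⟩
  show v * s ∈ _
  rw [mul_comm v s]
  exact h4 h3

lemma pc_inf_le {S T : Set A} :
    pc B S ⊓ pc B T ≤ pc B (Set.image2 (· * ·) S T) := by
  intro x ⟨hxS, hxT⟩
  exact mem_pc_sq B (pc_mul_mem B hB hxS hxT)

end PC

section PC2
open Pointwise

variable {k A : Type*} [CommRing k] [CommRing A] [Algebra k A]
variable (B : A → A → A)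

/-- finitely based as radical Poisson ideal -/
def FB (I : Ideal A) : Prop := ∃ G : Finset A, I = pc B ↑G

lemma FB_top : FB B (⊤ : Ideal A) := by
  refine ⟨{1}, ?_⟩
  have h1 : (1 : A) ∈ pc B ↑({1} : Finset A) := by
    apply subset_pc
    simp
  exact ((Ideal.eq_top_iff_one _).2 h1).symm

variable (hB : IsPoissonBracket k B)
include hB

lemma FB_bot [NoZeroDivisors A] : FB B (⊥ : Ideal A) := by
  refine ⟨∅, ?_⟩
  have hrp : RP B (⊥ : Ideal A) := by
    constructor
    · intro x y hy
      rw [Ideal.mem_bot] at hy ⊢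
      rw [hy]
      exact b_zero_right B hB x
    · exact Ideal.isRadical_bot_of_noZeroDivisors
  exact le_antisymm bot_le (pc_le B hrp (by simp))

omit hB

lemma mem_pc_union_singleton {Y : Set A} {h g : A} (hg : g ∈ pc B (Y ∪ {h})) :
    ∃ E : Finset A, ↑E ⊆ Y ∧ g ∈ pc B (↑E ∪ {h}) := by
  classical
  let U : Ideal A :=
    { carrier := {x | ∃ E : Finset A, ↑E ⊆ Y ∧ x ∈ pc B (↑E ∪ {h})}
      add_mem' := by
        rintro a b ⟨E1, hE1, ha⟩ ⟨E2, hE2, hb⟩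
        refine ⟨E1 ∪ E2, by simp [Set.union_subset_iff, hE1, hE2], ?_⟩
        have h1 : pc B (↑E1 ∪ {h}) ≤ pc B (↑(E1 ∪ E2) ∪ {h}) := by
          apply pc_mono; intro x hx
          rcases hx with hx | hx
          · exact Or.inl (by simp only [Finset.coe_union]; exact Or.inl hx)
          · exact Or.inr hx
        have h2 : pc B (↑E2 ∪ {h}) ≤ pc B (↑(E1 ∪ E2) ∪ {h}) := by
          apply pc_mono; intro x hx
          rcases hx with hx | hx
          · exact Or.inl (by simp only [Finset.coe_union]; exact Or.inr hx)
          · exact Or.inr hx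
        exact Ideal.add_mem _ (h1 ha) (h2 hb)
      zero_mem' := ⟨∅, by simp, Ideal.zero_mem _⟩
      smul_mem' := by
        rintro c x ⟨E, hE, hx⟩
        exact ⟨E, hE, by rw [smul_eq_mul]; exact Ideal.mul_mem_left _ _ hx⟩ }
  have hURP : RP B U := by
    constructor
    · rintro x y ⟨E, hE, hy⟩
      exact ⟨E, hE, (RP_pc B _).1 x y hy⟩
    · rintro x ⟨n, E, hE, hx⟩
      exact ⟨E, hE, (RP_pc B _).2 ⟨n, hx⟩⟩
  have hsub : Y ∪ {h} ⊆ ↑U := by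
    rintro x (hx | hx)
    · exact ⟨{x}, by simpa using hx, subset_pc B _ (Or.inl (by simp))⟩
    · exact ⟨∅, by simp, subset_pc B _ (Or.inr hx)⟩
  exact pc_le B hURP hsub hg

lemma chain_finset {c : Set (Ideal A)} (hchain : IsChain (· ≤ ·) c) {y : Ideal A} (hy : y ∈ c)
    (G : Finset A) (hG : ∀ g ∈ G, ∃ J ∈ c, g ∈ J) : ∃ J ∈ c, ∀ g ∈ G, g ∈ J := by
  classical
  induction G using Finset.induction with
  | empty => exact ⟨y, hy, by simp⟩
  | @insert a s ha ih =>
    obtain ⟨J, hJc, hJ⟩ := ih (fun g hg => hG g (Finset.mem_insert_of_mem hg))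
    obtain ⟨J', hJ'c, hJ'⟩ := hG a (Finset.mem_insert_self a s)
    rcases hchain.total hJc hJ'c with h | h
    · exact ⟨J', hJ'c, fun g hg => by
        rcases Finset.mem_insert.1 hg with rfl | hg
        · exact hJ'
        · exact h (hJ g hg)⟩
    · exact ⟨J, hJc, fun g hg => by
        rcases Finset.mem_insert.1 hg with rfl | hg
        · exact h hJ'
        · exact hJ g hg⟩

/-- existence of a maximal non-finitely-based radical Poisson ideal -/
lemma exists_maximal_bad (hex : ∃ I : Ideal A, RP B I ∧ ¬ FB B I) :
    ∃ Q : Ideal A, (RP B Q ∧ ¬ FB B Q) ∧ ∀ J : Ideal A, RP B J → Q < J → FB B J := by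
  classical
  obtain ⟨I₀, hI₀⟩ := hex
  have hzorn := zorn_le_nonempty₀ {I : Ideal A | RP B I ∧ ¬ FB B I} ?_ I₀ hI₀
  · obtain ⟨Q, _, hQmem, hQmax⟩ := hzorn
    refine ⟨Q, hQmem, fun J hJ hQJ => ?_⟩
    by_contra hJbad
    exact absurd (hQmax ⟨hJ, hJbad⟩ hQJ.le) (not_le_of_gt hQJ)
  · intro c hc hchain y hy
    refine ⟨sSup c, ?_, fun z hz => le_sSup hz⟩
    have hne : c.Nonempty := ⟨y, hy⟩
    have hdir : DirectedOn (· ≤ ·) c := hchain.directedOn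
    have hmem : ∀ x : A, x ∈ sSup c ↔ ∃ J ∈ c, x ∈ J := fun x =>
      Submodule.mem_sSup_of_directed hne hdir
    have hrp : RP B (sSup c) := by
      constructor
      · intro x z hz
        obtain ⟨J, hJc, hzJ⟩ := (hmem z).1 hz
        exact (hmem _).2 ⟨J, hJc, (hc hJc).1.1 x z hzJ⟩
      · rintro x ⟨n, hx⟩
        obtain ⟨J, hJc, hxJ⟩ := (hmem _).1 hx
        exact (hmem x).2 ⟨J, hJc, (hc hJc).1.2 ⟨n, hxJ⟩⟩
    refine ⟨hrp, ?_⟩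
    rintro ⟨G, hG⟩
    -- all elements of G are in some member of the chain
    have hGmem : ∀ g ∈ G, ∃ J ∈ c, g ∈ J := by
      intro g hg
      refine (hmem g).1 ?_
      rw [hG]
      exact subset_pc B _ hg
    have hfind := chain_finset hchain hy G hGmem
    obtain ⟨J, hJc, hJall⟩ := hfind
    have h1 : sSup c ≤ J := by
      rw [hG]
      exact pc_le B (hc hJc).1 (fun g hg => hJall g hg)
    have h2 : J = sSup c := le_antisymm (le_sSup hJc) h1
    exact (hc hJc).2 ⟨G, by rw [h2, hG]⟩

include hB in
lemma maximal_bad_isPrime (Q : Ideal A) (hQ : RP B Q) (hbad : ¬ FB B Q)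
    (hmax : ∀ J : Ideal A, RP B J → Q < J → FB B J) : Q.IsPrime := by
  classical
  constructor
  · rintro rfl
    exact hbad (FB_top B)
  · intro a b hab
    by_contra hcon
    push_neg at hcon
    obtain ⟨ha, hb⟩ := hcon
    have hQa : Q < pc B (↑Q ∪ {a}) := by
      refine lt_of_le_of_ne (le_trans (pc_eq_self B hQ).ge (pc_mono B Set.subset_union_left)) ?_
      intro h
      exact ha (h ▸ subset_pc B _ (Or.inr rfl))
    have hQb : Q < pc B (↑Q ∪ {b}) := by
      refine lt_of_le_of_ne (le_trans (pc_eq_self B hQ).ge (pc_mono B Set.subset_union_left)) ?_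
      intro h
      exact hb (h ▸ subset_pc B _ (Or.inr rfl))
    obtain ⟨Ga, hGa⟩ := hmax _ (RP_pc B _) hQa
    obtain ⟨Gb, hGb⟩ := hmax _ (RP_pc B _) hQb
    apply hbad
    refine ⟨Ga * Gb, ?_⟩
    have hcoe : (↑(Ga * Gb) : Set A) = Set.image2 (· * ·) ↑Ga ↑Gb := by
      rw [Finset.coe_mul]; rfl
    apply le_antisymm
    · intro g hg
      have hga : g ∈ pc B ↑Ga := by
        rw [← hGa]; exact subset_pc B _ (Or.inl hg)
      have hgb : g ∈ pc B ↑Gb := by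
        rw [← hGb]; exact subset_pc B _ (Or.inl hg)
      have := pc_inf_le B hB (S := (↑Ga : Set A)) (T := (↑Gb : Set A)) ⟨hga, hgb⟩
      rwa [hcoe]
    · refine pc_le B hQ ?_
      rw [hcoe]
      rintro x ⟨s, hs, t, ht, rfl⟩
      have hsmem : s ∈ pc B (↑Q ∪ {a}) := by rw [hGa]; exact subset_pc B _ hs
      have htmem : t ∈ pc B (↑Q ∪ {b}) := by rw [hGb]; exact subset_pc B _ ht
      have hprod := pc_mul_mem B hB hsmem htmem
      have hle : pc B (Set.image2 (· * ·) (↑Q ∪ {a}) (↑Q ∪ {b})) ≤ Q := by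
        refine pc_le B hQ ?_
        rintro z ⟨u, hu, v, hv, rfl⟩
        rcases hu with hu | hu
        · exact Ideal.mul_mem_right _ _ hu
        · rcases hv with hv | hv
          · exact Ideal.mul_mem_left _ _ hv
          · simp only [Set.mem_singleton_iff] at hu hv
            rw [hu, hv]; exact hab
      exact SetLike.mem_coe.2 (hle hprod)

end PC2
section MvLemmas
open MvPolynomial

variable {σ : Type*} {R : Type*} [CommSemiring R]

lemma mem_vars_iff_degreeOf_ne_zero (f : MvPolynomial σ R) (i : σ) :
    i ∈ f.vars ↔ degreeOf i f ≠ 0 := by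
  rw [MvPolynomial.mem_vars, MvPolynomial.degreeOf_eq_sup]
  constructor
  · rintro ⟨d, hd, hid⟩ h
    have := Finset.le_sup (f := fun m => m i) hd
    rw [h, Nat.le_zero] at this
    exact absurd this (Finsupp.mem_support_iff.1 hid)
  · intro h
    by_contra hc
    push_neg at hc
    apply h
    refine Nat.le_zero.1 (Finset.sup_le fun m hm => Nat.le_zero.2 ?_)
    by_contra hmi
    exact hc m hm (Finsupp.mem_support_iff.2 hmi)

lemma pderiv_support_structure (i : σ) (f : MvPolynomial σ R) :
    ∀ v ∈ (MvPolynomial.pderiv i f).support,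
      ∃ u ∈ f.support, u i ≠ 0 ∧ v = u - Finsupp.single i 1 := by
  classical
  intro v hv
  have hrw : MvPolynomial.pderiv i f
      = ∑ u ∈ f.support, MvPolynomial.monomial (u - Finsupp.single i 1)
          (MvPolynomial.coeff u f * (u i : R)) := by
    conv_lhs => rw [f.as_sum]
    rw [map_sum]
    refine Finset.sum_congr rfl fun u _ => ?_
    rw [MvPolynomial.pderiv_monomial]
  rw [hrw] at hv
  have := MvPolynomial.support_sum hv
  rw [Finset.mem_biUnion] at this
  obtain ⟨u, hu, hv2⟩ := this
  have hsub := MvPolynomial.support_monomial (s := u - Finsupp.single i 1)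
      (a := MvPolynomial.coeff u f * (u i : R)) (h := Classical.dec _)
  rw [hsub] at hv2
  by_cases hz : MvPolynomial.coeff u f * (u i : R) = 0
  · simp [hz] at hv2
  · simp only [if_neg hz, Finset.mem_singleton] at hv2
    have hui : u i ≠ 0 := by
      intro h
      apply hz
      rw [h]
      simp
    exact ⟨u, hu, hui, hv2⟩

lemma degreeOf_pderiv_lt {i : σ} {f : MvPolynomial σ R} (h : degreeOf i f ≠ 0) :
    degreeOf i (MvPolynomial.pderiv i f) < degreeOf i f := by
  have hle : degreeOf i (MvPolynomial.pderiv i f) ≤ degreeOf i f - 1 := by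
    rw [MvPolynomial.degreeOf_le_iff]
    intro v hv
    obtain ⟨u, hu, hui, rfl⟩ := pderiv_support_structure i f v hv
    have h1 : u i ≤ degreeOf i f := by
      rw [MvPolynomial.degreeOf_eq_sup]
      exact Finset.le_sup (f := fun m => m i) hu
    have h2 : (u - Finsupp.single i 1 : σ →₀ ℕ) i = u i - 1 := by
      rw [Finsupp.tsub_apply, Finsupp.single_eq_same]
    omega
  omega

lemma vars_pderiv_subset (i : σ) (f : MvPolynomial σ R) :
    (MvPolynomial.pderiv i f).vars ⊆ f.vars := by
  intro j hj
  rw [MvPolynomial.mem_vars] at hj ⊢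
  obtain ⟨v, hv, hjv⟩ := hj
  obtain ⟨u, hu, _, rfl⟩ := pderiv_support_structure i f v hv
  exact ⟨u, hu, Finsupp.support_tsub hjv⟩

lemma pderiv_ne_zero {k : Type*} [Field k] [CharZero k] {i : σ} {f : MvPolynomial σ k}
    (h : degreeOf i f ≠ 0) : MvPolynomial.pderiv i f ≠ 0 := by
  classical
  have hf : f ≠ 0 := by
    intro h0
    rw [h0] at h
    simp at h
  have hne : f.support.Nonempty := MvPolynomial.support_nonempty.2 hf
  obtain ⟨u₀, hu₀, hsup⟩ := Finset.exists_mem_eq_sup f.support hne (fun m => m i)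
  have hd : u₀ i = degreeOf i f := by rw [MvPolynomial.degreeOf_eq_sup, hsup]
  have hu₀i : u₀ i ≠ 0 := by rw [hd]; exact h
  intro hzero
  have hco : MvPolynomial.coeff (u₀ - Finsupp.single i 1) (MvPolynomial.pderiv i f) = 0 := by
    rw [hzero]; simp
  -- compute the coefficient
  have hrw : MvPolynomial.pderiv i f
      = ∑ u ∈ f.support, MvPolynomial.monomial (u - Finsupp.single i 1)
          (MvPolynomial.coeff u f * (u i : k)) := by
    conv_lhs => rw [f.as_sum]
    rw [map_sum]
    refine Finset.sum_congr rfl fun u _ => ?_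
    rw [MvPolynomial.pderiv_monomial]
  rw [hrw] at hco
  rw [MvPolynomial.coeff_sum] at hco
  have hsingle : ∀ u ∈ f.support, u ≠ u₀ →
      MvPolynomial.coeff (u₀ - Finsupp.single i 1)
        ((MvPolynomial.monomial (u - Finsupp.single i 1))
          (MvPolynomial.coeff u f * (u i : k))) = 0 := by
    intro u hu hne'
    rw [MvPolynomial.coeff_monomial]
    by_cases hui : u i = 0
    · simp [hui]
    · rw [if_neg]
      intro heq
      apply hne'
      have h1 : u - Finsupp.single i 1 + Finsupp.single i 1 = u :=
        tsub_add_cancel_of_le (Finsupp.single_le_iff.2 (Nat.one_le_iff_ne_zero.2 hui))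
      have h2 : u₀ - Finsupp.single i 1 + Finsupp.single i 1 = u₀ :=
        tsub_add_cancel_of_le (Finsupp.single_le_iff.2 (Nat.one_le_iff_ne_zero.2 hu₀i))
      rw [← h1, ← h2, heq]
  rw [Finset.sum_eq_single u₀ hsingle (fun h' => absurd hu₀ h')] at hco
  rw [MvPolynomial.coeff_monomial, if_pos rfl] at hco
  rcases mul_eq_zero.1 hco with hc | hc
  · exact absurd hc (MvPolynomial.mem_support_iff.1 hu₀)
  · exact hu₀i (Nat.cast_eq_zero.1 hc)

end MvLemmas
section MvLemmas2
open MvPolynomial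

variable {σ : Type*} {R : Type*} [CommSemiring R]

/-- decomposition of a polynomial along one variable -/
lemma decomp_variable (M : σ) (g : MvPolynomial σ R) (hdeg : degreeOf M g ≠ 0) :
    ∃ q g₀ : MvPolynomial σ R, g = X M * q + g₀ ∧
      degreeOf M q < degreeOf M g ∧ degreeOf M g₀ = 0 ∧
      q.vars ⊆ g.vars ∧ g₀.vars ⊆ g.vars := by
  classical
  set e := degreeOf M g with he
  set q : MvPolynomial σ R :=
    ∑ u ∈ g.support.filter (fun u => u M ≠ 0),
      MvPolynomial.monomial (u - Finsupp.single M 1) (MvPolynomial.coeff u g) with hq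
  set g₀ : MvPolynomial σ R :=
    ∑ u ∈ g.support.filter (fun u => ¬ (u M ≠ 0)),
      MvPolynomial.monomial u (MvPolynomial.coeff u g) with hg₀
  have hsupq : ∀ v ∈ q.support, ∃ u ∈ g.support, u M ≠ 0 ∧ v = u - Finsupp.single M 1 := by
    intro v hv
    have := MvPolynomial.support_sum hv
    rw [Finset.mem_biUnion] at this
    obtain ⟨u, hu, hv2⟩ := this
    rw [Finset.mem_filter] at hu
    have hsub := MvPolynomial.support_monomial (s := u - Finsupp.single M 1)
        (a := MvPolynomial.coeff u g) (h := Classical.dec _)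
    rw [hsub] at hv2
    by_cases hz : MvPolynomial.coeff u g = 0
    · simp [hz] at hv2
    · simp only [if_neg hz, Finset.mem_singleton] at hv2
      exact ⟨u, hu.1, hu.2, hv2⟩
  have hsupg₀ : ∀ v ∈ g₀.support, v ∈ g.support ∧ v M = 0 := by
    intro v hv
    have := MvPolynomial.support_sum hv
    rw [Finset.mem_biUnion] at this
    obtain ⟨u, hu, hv2⟩ := this
    rw [Finset.mem_filter] at hu
    have hsub := MvPolynomial.support_monomial (s := u)
        (a := MvPolynomial.coeff u g) (h := Classical.dec _)
    rw [hsub] at hv2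
    by_cases hz : MvPolynomial.coeff u g = 0
    · simp [hz] at hv2
    · simp only [if_neg hz, Finset.mem_singleton] at hv2
      subst hv2
      exact ⟨hu.1, by simpa using hu.2⟩
  refine ⟨q, g₀, ?_, ?_, ?_, ?_, ?_⟩
  · -- g = X M * q + g₀
    rw [hq, Finset.mul_sum]
    have hterm : ∀ u ∈ g.support.filter (fun u => u M ≠ 0),
        X M * MvPolynomial.monomial (u - Finsupp.single M 1) (MvPolynomial.coeff u g)
          = MvPolynomial.monomial u (MvPolynomial.coeff u g) := by
      intro u hu
      rw [Finset.mem_filter] at hu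
      rw [MvPolynomial.X, MvPolynomial.monomial_mul, one_mul, add_comm,
        tsub_add_cancel_of_le (Finsupp.single_le_iff.2 (Nat.one_le_iff_ne_zero.2 hu.2))]
    rw [Finset.sum_congr rfl hterm, hg₀]
    rw [Finset.sum_filter_add_sum_filter_not g.support (fun u => u M ≠ 0)]
    exact g.as_sum
  · -- degreeOf M q < e
    have h1 : degreeOf M q ≤ e - 1 := by
      rw [MvPolynomial.degreeOf_le_iff]
      intro v hv
      obtain ⟨u, hu, huM, rfl⟩ := hsupq v hv
      have h2 : u M ≤ e := by
        rw [he, MvPolynomial.degreeOf_eq_sup]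
        exact Finset.le_sup (f := fun m => m M) hu
      have h3 : (u - Finsupp.single M 1 : σ →₀ ℕ) M = u M - 1 := by
        rw [Finsupp.tsub_apply, Finsupp.single_eq_same]
      omega
    omega
  · -- degreeOf M g₀ = 0
    refine Nat.le_zero.1 ?_
    rw [MvPolynomial.degreeOf_le_iff]
    intro v hv
    exact Nat.le_zero.2 (hsupg₀ v hv).2
  · -- vars q ⊆ vars g
    intro j hj
    rw [MvPolynomial.mem_vars] at hj ⊢
    obtain ⟨v, hv, hjv⟩ := hj
    obtain ⟨u, hu, _, rfl⟩ := hsupq v hv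
    exact ⟨u, hu, Finsupp.support_tsub hjv⟩
  · intro j hj
    rw [MvPolynomial.mem_vars] at hj ⊢
    obtain ⟨v, hv, hjv⟩ := hj
    exact ⟨v, (hsupg₀ v hv).1, hjv⟩

/-- a polynomial with empty vars is a constant -/
lemma eq_C_of_vars_empty (f : MvPolynomial σ R) (h : f.vars = ∅) :
    ∃ a : R, f = MvPolynomial.C a := by
  classical
  refine ⟨MvPolynomial.coeff 0 f, ?_⟩
  have hsup : f.support ⊆ {0} := by
    intro u hu
    rw [Finset.mem_singleton]
    by_contra hne
    obtain ⟨i, hi⟩ := Finsupp.support_nonempty_iff.2 hne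
    have : i ∈ f.vars := (MvPolynomial.mem_vars i).2 ⟨u, hu, hi⟩
    rw [h] at this
    exact absurd this (Finset.notMem_empty i)
  conv_lhs => rw [f.as_sum]
  rcases Finset.subset_singleton_iff.1 hsup with h0 | h0
  · rw [h0, Finset.sum_empty]
    have : MvPolynomial.coeff 0 f = 0 := by
      rw [← MvPolynomial.notMem_support_iff, h0]
      exact Finset.notMem_empty _
    rw [this, map_zero]
  · rw [h0, Finset.sum_singleton, MvPolynomial.monomial_zero']

end MvLemmas2

section PNatLemmas
open MvPolynomial

/-- the set of variables up to M -/
def Sle (M : ℕ+) : Set ℕ+ := {i : ℕ+ | i ≤ M}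

lemma Sle_finite (M : ℕ+) : (Sle M).Finite := by
  have : Sle M ⊆ ((PNat.natPred) ⁻¹' (Set.Iic (PNat.natPred M))) := by
    intro i hi
    simp only [Set.mem_preimage, Set.mem_Iic]
    exact Nat.pred_le_pred hi
  refine Set.Finite.subset (Set.Finite.preimage ?_ (Set.finite_Iic _)) this
  intro a _ b _ h
  exact PNat.natPred_injective h

lemma mem_Sle {i M : ℕ+} : i ∈ Sle M ↔ i ≤ M := Iff.rfl

lemma Sle_mono {m n : ℕ+} (h : m ≤ n) : Sle m ⊆ Sle n := fun _ hi => le_trans hi h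

variable {k : Type*} [Field k]

lemma mem_supported_Sle {f : MvPolynomial ℕ+ k} {M : ℕ+} :
    f ∈ MvPolynomial.supported k (Sle M) ↔ ∀ i ∈ f.vars, i ≤ M := by
  rw [MvPolynomial.mem_supported]
  constructor
  · intro h i hi
    exact h hi
  · intro h i hi
    exact h i hi

/-- finite generation of the cut of an ideal by variables up to M -/
lemma fg_cut (Q : Ideal (MvPolynomial ℕ+ k)) (M : ℕ+) :
    ∃ C₀ : Finset (MvPolynomial ℕ+ k), (↑C₀ : Set (MvPolynomial ℕ+ k)) ⊆ Q ∧
      ∀ g ∈ Q, g ∈ MvPolynomial.supported k (Sle M) → g ∈ Ideal.span (↑C₀ : Set _) := by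
  classical
  haveI : Finite ↥(Sle M) := (Sle_finite M).to_subtype
  haveI hnoeth : IsNoetherianRing ↥(MvPolynomial.supported k (Sle M)) := by
    refine isNoetherianRing_of_ringEquiv (MvPolynomial ↥(Sle M) k) ?_
    exact (MvPolynomial.supportedEquivMvPolynomial (Sle M)).symm.toRingEquiv
  set val := ((MvPolynomial.supported k (Sle M)).val : _ →ₐ[k] MvPolynomial ℕ+ k)
  set Q₀ : Ideal ↥(MvPolynomial.supported k (Sle M)) := Q.comap val.toRingHom with hQ₀
  have hfg : Q₀.FG := IsNoetherian.noetherian Q₀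
  obtain ⟨G, hG⟩ := hfg
  refine ⟨G.image (fun x => (val x : MvPolynomial ℕ+ k)), ?_, ?_⟩
  · intro x hx
    simp only [Finset.coe_image, Set.mem_image, Finset.mem_coe] at hx
    obtain ⟨y, hy, rfl⟩ := hx
    have : y ∈ Q₀ := by
      rw [← hG]
      exact Ideal.subset_span hy
    exact this
  · intro g hgQ hgsup
    have hmem : (⟨g, hgsup⟩ : ↥(MvPolynomial.supported k (Sle M))) ∈ Q₀ := hgQ
    rw [← hG] at hmem
    have := Ideal.mem_map_of_mem val.toRingHom hmem
    rw [Ideal.map_span] at this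
    have heq : (val.toRingHom '' ↑G : Set (MvPolynomial ℕ+ k))
        = ↑(G.image (fun x => (val x : MvPolynomial ℕ+ k))) := by
      rw [Finset.coe_image]
      rfl
    rwa [heq] at this

end PNatLemmas
set_option linter.unusedSectionVars false
section Split3
open MvPolynomial
variable {k : Type*} [Field k]

/-- split off the part of a polynomial involving variables > 2 -/
lemma split_ge3 (g : MvPolynomial ℕ+ k) :
    ∃ g₀ : MvPolynomial ℕ+ k, g₀ ∈ MvPolynomial.supported k (Sle 2) ∧
      g - g₀ ∈ Ideal.span {x : MvPolynomial ℕ+ k | ∃ i : ℕ+, ¬ i ≤ (2:ℕ+) ∧ x = X i} := by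
  classical
  set P : (ℕ+ →₀ ℕ) → Prop := fun u => ∀ j ∈ u.support, j ≤ (2:ℕ+) with hP
  set g₀ : MvPolynomial ℕ+ k :=
    ∑ u ∈ g.support.filter P, MvPolynomial.monomial u (MvPolynomial.coeff u g) with hg₀
  refine ⟨g₀, ?_, ?_⟩
  · rw [MvPolynomial.mem_supported]
    intro j hj
    rw [Finset.mem_coe, MvPolynomial.mem_vars] at hj
    obtain ⟨v, hv, hjv⟩ := hj
    have := MvPolynomial.support_sum hv
    rw [Finset.mem_biUnion] at this
    obtain ⟨u, hu, hv2⟩ := this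
    rw [Finset.mem_filter] at hu
    have hsub := MvPolynomial.support_monomial (s := u)
        (a := MvPolynomial.coeff u g) (h := Classical.dec _)
    rw [hsub] at hv2
    by_cases hz : MvPolynomial.coeff u g = 0
    · simp [hz] at hv2
    · simp only [if_neg hz, Finset.mem_singleton] at hv2
      subst hv2
      exact hu.2 j hjv
  · have hgs : g - g₀ = ∑ u ∈ g.support.filter (fun u => ¬ P u),
        MvPolynomial.monomial u (MvPolynomial.coeff u g) := by
      have := Finset.sum_filter_add_sum_filter_not g.support P
        (fun u => MvPolynomial.monomial u (MvPolynomial.coeff u g))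
      rw [← g.as_sum] at this
      rw [sub_eq_iff_eq_add, hg₀, add_comm]
      exact this.symm
    rw [hgs]
    refine Ideal.sum_mem _ ?_
    intro u hu
    rw [Finset.mem_filter] at hu
    have h2 : ¬ ∀ j ∈ u.support, j ≤ (2:ℕ+) := hu.2
    push_neg at h2
    obtain ⟨j, hjsup, hj2⟩ := h2
    have : MvPolynomial.monomial u (MvPolynomial.coeff u g)
        = X j * MvPolynomial.monomial (u - Finsupp.single j 1) (MvPolynomial.coeff u g) := by
      rw [MvPolynomial.X, MvPolynomial.monomial_mul, one_mul, add_comm,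
        tsub_add_cancel_of_le (Finsupp.single_le_iff.2
          (Nat.one_le_iff_ne_zero.2 (Finsupp.mem_support_iff.1 hjsup)))]
    rw [this]
    exact Ideal.mul_mem_right _ _ (Ideal.subset_span ⟨j, not_le.2 hj2, rfl⟩)

end Split3

section Bracket
open MvPolynomial

variable {k : Type*} [Field k] [CharZero k]
variable (B : MvPolynomial ℕ+ k → MvPolynomial ℕ+ k → MvPolynomial ℕ+ k)
variable (hB : IsPoissonBracket k B)
variable (hgen : ∀ i j : ℕ+,
      B (X i) (X j) = (((j : ℕ) : ℤ) - ((i : ℕ) : ℤ)) • (X (i + j) : MvPolynomial ℕ+ k))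

include hB

lemma b_smul_right (a : MvPolynomial ℕ+ k) (r : k) (x : MvPolynomial ℕ+ k) :
    B a (r • x) = r • B a x := by
  obtain ⟨hadd, hsmul, hskew, hjac, hleib⟩ := hB
  rw [hskew a (r • x), hsmul, hskew x a]
  simp

lemma b_one_right (a : MvPolynomial ℕ+ k) : B a 1 = 0 := by
  have h := hB.2.2.2.2 a 1 1
  rw [mul_one, mul_one, one_mul] at h
  have := congrArg (fun t => t - B a 1) h
  simpa using this.symm

lemma b_C_mul_right (a : MvPolynomial ℕ+ k) (c : k) (y : MvPolynomial ℕ+ k) :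
    B a (MvPolynomial.C c * y) = MvPolynomial.C c * B a y := by
  rw [← MvPolynomial.smul_eq_C_mul, ← MvPolynomial.smul_eq_C_mul]
  exact b_smul_right B hB a c y

lemma b_C_right (a : MvPolynomial ℕ+ k) (c : k) : B a (MvPolynomial.C c) = 0 := by
  have := b_C_mul_right B hB a c 1
  rw [mul_one] at this
  rw [this, b_one_right B hB, mul_zero]

include hgen

lemma D_X (n : ℕ+) :
    B (X 1) (X n) = MvPolynomial.C (((n:ℕ):k) - 1) * X (n+1) := by
  have h := hgen 1 n
  rw [add_comm] at h
  rw [h, zsmul_eq_mul]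
  norm_cast

/-- the chain rule decomposition for D = {x₁, -} on polynomials in variables ≤ m -/
lemma CR (m : ℕ+) {f : MvPolynomial ℕ+ k} (hf : f ∈ MvPolynomial.supported k (Sle m)) :
    B (X 1) f - MvPolynomial.C (((m:ℕ):k) - 1) * (MvPolynomial.pderiv m f * X (m+1))
      ∈ MvPolynomial.supported k (Sle m) := by
  classical
  rw [MvPolynomial.supported_eq_adjoin_X] at hf
  induction hf using Algebra.adjoin_induction with
  | mem x hx =>
    obtain ⟨i, hi, rfl⟩ := hx
    by_cases him : i = m
    · subst him
      rw [D_X B hB hgen, MvPolynomial.pderiv_X_self, one_mul, sub_self]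
      exact Subalgebra.zero_mem _
    · have hpd : MvPolynomial.pderiv m (X i : MvPolynomial ℕ+ k) = 0 := by
        rw [MvPolynomial.pderiv_X]
        simp [Pi.single_apply, Ne.symm him]
      rw [D_X B hB hgen, hpd, zero_mul, mul_zero, sub_zero]
      have hi1 : i + 1 ≤ m := by
        have h1 := (PNat.coe_le_coe i m).2 hi
        have hne : (i:ℕ) ≠ (m:ℕ) := fun hc => him (PNat.coe_injective hc)
        refine (PNat.coe_le_coe (i+1) m).1 ?_
        rw [PNat.add_coe, PNat.one_coe]
        omega
      exact Subalgebra.mul_mem _ (Subalgebra.algebraMap_mem _ _)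
        ((MvPolynomial.X_mem_supported).2 hi1)
  | algebraMap r =>
    rw [MvPolynomial.algebraMap_eq, b_C_right B hB, MvPolynomial.pderiv_C,
      zero_mul, mul_zero, sub_zero]
    exact Subalgebra.zero_mem _
  | add x y hx hy ihx ihy =>
    have hadd := hB.1
    have : B (X 1) (x + y) = B (X 1) x + B (X 1) y := by
      rw [hB.2.2.1 (X 1) (x+y), hadd, hB.2.2.1 x (X 1), hB.2.2.1 y (X 1)]
      ring
    rw [this, map_add]
    have heq : B (X 1) x + B (X 1) y -
        MvPolynomial.C (((m:ℕ):k) - 1) *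
          ((MvPolynomial.pderiv m x + MvPolynomial.pderiv m y) * X (m+1))
        = (B (X 1) x - MvPolynomial.C (((m:ℕ):k) - 1) * (MvPolynomial.pderiv m x * X (m+1)))
          + (B (X 1) y - MvPolynomial.C (((m:ℕ):k) - 1) * (MvPolynomial.pderiv m y * X (m+1))) := by
      ring
    rw [heq]
    exact Subalgebra.add_mem _ ihx ihy
  | mul x y hx hy ihx ihy =>
    have hleib := hB.2.2.2.2
    rw [hleib (X 1) x y, MvPolynomial.pderiv_mul]
    have heq : B (X 1) x * y + x * B (X 1) y -
        MvPolynomial.C (((m:ℕ):k) - 1) *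
          ((MvPolynomial.pderiv m x * y + x * MvPolynomial.pderiv m y) * X (m+1))
        = y * (B (X 1) x - MvPolynomial.C (((m:ℕ):k) - 1) * (MvPolynomial.pderiv m x * X (m+1)))
          + x * (B (X 1) y - MvPolynomial.C (((m:ℕ):k) - 1) * (MvPolynomial.pderiv m y * X (m+1))) := by
      ring
    rw [heq]
    rw [← MvPolynomial.supported_eq_adjoin_X] at hx hy
    exact Subalgebra.add_mem _ (Subalgebra.mul_mem _ hy ihx) (Subalgebra.mul_mem _ hx ihy)

lemma D_mem_supported (m : ℕ+) {f : MvPolynomial ℕ+ k}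
    (hf : f ∈ MvPolynomial.supported k (Sle m)) :
    B (X 1) f ∈ MvPolynomial.supported k (Sle (m+1)) := by
  have hcr := CR B hB hgen m hf
  have h1 : B (X 1) f = (B (X 1) f -
      MvPolynomial.C (((m:ℕ):k) - 1) * (MvPolynomial.pderiv m f * X (m+1)))
      + MvPolynomial.C (((m:ℕ):k) - 1) * (MvPolynomial.pderiv m f * X (m+1)) := by ring
  rw [h1]
  have hmono : MvPolynomial.supported k (Sle m) ≤ MvPolynomial.supported k (Sle (m+1)) :=
    MvPolynomial.supported_mono (Sle_mono (by
      refine (PNat.coe_le_coe m (m+1)).1 ?_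
      rw [PNat.add_coe, PNat.one_coe]
      omega))
  refine Subalgebra.add_mem _ (hmono hcr) ?_
  refine Subalgebra.mul_mem _ (Subalgebra.algebraMap_mem _ _) ?_
  refine Subalgebra.mul_mem _ ?_ ((MvPolynomial.X_mem_supported).2 (mem_Sle.2 le_rfl))
  apply hmono
  rw [MvPolynomial.mem_supported]
  exact Set.Subset.trans (Finset.coe_subset.2 (vars_pderiv_subset m f))
    ((MvPolynomial.mem_supported).1 hf)

end Bracket
section Bracket2
open MvPolynomial

variable {k : Type*} [Field k] [CharZero k]

lemma pderiv_mem_supported {s : Set ℕ+} {f : MvPolynomial ℕ+ k} (i : ℕ+)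
    (hf : f ∈ MvPolynomial.supported k s) : MvPolynomial.pderiv i f ∈ MvPolynomial.supported k s := by
  rw [MvPolynomial.mem_supported] at hf ⊢
  exact Set.Subset.trans (Finset.coe_subset.2 (vars_pderiv_subset i f)) hf

lemma degreeOf_eq_zero_of_not_mem_vars {f : MvPolynomial ℕ+ k} {i : ℕ+} (h : i ∉ f.vars) :
    MvPolynomial.degreeOf i f = 0 := by
  by_contra hc
  exact h ((mem_vars_iff_degreeOf_ne_zero f i).2 hc)

variable (B : MvPolynomial ℕ+ k → MvPolynomial ℕ+ k → MvPolynomial ℕ+ k)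
variable (hB : IsPoissonBracket k B)
variable (hgen : ∀ i j : ℕ+,
      B (X i) (X j) = (((j : ℕ) : ℤ) - ((i : ℕ) : ℤ)) • (X (i + j) : MvPolynomial ℕ+ k))

include hB hgen

lemma Klemma (p : ℕ+) (hp : (2:ℕ) ≤ (p:ℕ)) {f : MvPolynomial ℕ+ k}
    (hf : f ∈ MvPolynomial.supported k (Sle p)) :
    ∀ t : ℕ, ∃ (c : k) (N : ℕ+) (T : MvPolynomial ℕ+ k), c ≠ 0 ∧ (N:ℕ) = (p:ℕ) + t ∧
      T ∈ MvPolynomial.supported k (Sle N) ∧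
      (fun g => B (X 1) g)^[t+1] f
        = MvPolynomial.C c * (MvPolynomial.pderiv p f * X (N+1)) + T := by
  intro t
  induction t with
  | zero =>
    refine ⟨((p:ℕ):k) - 1, p, B (X 1) f
      - MvPolynomial.C (((p:ℕ):k) - 1) * (MvPolynomial.pderiv p f * X (p+1)), ?_, ?_, ?_, ?_⟩
    · intro hc
      rw [sub_eq_zero] at hc
      have hp1 : (p:ℕ) = 1 := by exact_mod_cast hc
      omega
    · omega
    · exact CR B hB hgen p hf
    · rw [Function.iterate_one]
      ring
  | succ t ih =>
    obtain ⟨c, N, T, hc, hN, hT, heq⟩ := ih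
    have hNpos : 0 < (N:ℕ) := by omega
    refine ⟨c * ((N:ℕ):k), N + 1, MvPolynomial.C c * (B (X 1) (MvPolynomial.pderiv p f) * X (N+1))
      + B (X 1) T, ?_, ?_, ?_, ?_⟩
    · exact mul_ne_zero hc (Nat.cast_ne_zero.2 (by omega))
    · rw [PNat.add_coe, PNat.one_coe]; omega
    · have hS : MvPolynomial.pderiv p f ∈ MvPolynomial.supported k (Sle p) :=
        pderiv_mem_supported p hf
      have hp1N : (p:ℕ+) + 1 ≤ N + 1 := by
        refine (PNat.coe_le_coe _ _).1 ?_
        rw [PNat.add_coe, PNat.add_coe, PNat.one_coe]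
        omega
      refine Subalgebra.add_mem _ ?_ ?_
      · refine Subalgebra.mul_mem _ (Subalgebra.algebraMap_mem _ _) ?_
        refine Subalgebra.mul_mem _ ?_ ((MvPolynomial.X_mem_supported).2 (mem_Sle.2 le_rfl))
        exact MvPolynomial.supported_mono (Sle_mono hp1N) (D_mem_supported B hB hgen p hS)
      · exact MvPolynomial.supported_mono (Sle_mono le_rfl) (D_mem_supported B hB hgen N hT)
    · have hstep : (fun g => B (X 1) g)^[t+1+1] f
          = B (X 1) ((fun g => B (X 1) g)^[t+1] f) := by
        rw [Function.iterate_succ_apply']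
      rw [hstep, heq]
      have h1 : B (X 1) (MvPolynomial.C c * (MvPolynomial.pderiv p f * X (N+1)) + T)
          = MvPolynomial.C c * (B (X 1) (MvPolynomial.pderiv p f * X (N+1))) + B (X 1) T := by
        rw [b_add_right B hB, b_C_mul_right B hB]
      have h2 : B (X 1) (MvPolynomial.pderiv p f * X (N+1))
          = B (X 1) (MvPolynomial.pderiv p f) * X (N+1)
            + MvPolynomial.pderiv p f * (MvPolynomial.C ((((N+1:ℕ+):ℕ):k) - 1) * X (N+1+1)) := by
        rw [hB.2.2.2.2 (X 1) (MvPolynomial.pderiv p f) (X (N+1)), D_X B hB hgen (N+1)]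
      have h3 : ((((N+1:ℕ+):ℕ):k) - 1) = ((N:ℕ):k) := by
        rw [PNat.add_coe, PNat.one_coe]
        push_cast
        ring
      rw [h1, h2, h3]
      rw [show MvPolynomial.C (c * ((N:ℕ):k)) = MvPolynomial.C c * MvPolynomial.C ((N:ℕ):k) from map_mul _ _ _]
      ring

lemma elim_aux (p : ℕ+) (hp : (2:ℕ) ≤ (p:ℕ)) {f : MvPolynomial ℕ+ k}
    (hf : f ∈ MvPolynomial.supported k (Sle p)) :
    ∀ t : ℕ, ∀ N : ℕ+, (N:ℕ) = (p:ℕ) + t → ∀ g ∈ MvPolynomial.supported k (Sle N),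
    ∃ (n : ℕ) (r : MvPolynomial ℕ+ k), r ∈ MvPolynomial.supported k (Sle p) ∧
      (MvPolynomial.pderiv p f)^n * g - r
        ∈ Ideal.span (Set.range fun j => (fun g => B (X 1) g)^[j] f) := by
  intro t
  induction t with
  | zero =>
    intro N hN g hg
    have hNp : N = p := PNat.coe_injective (by omega)
    subst hNp
    exact ⟨0, g, hg, by rw [pow_zero, one_mul, sub_self]; exact Ideal.zero_mem _⟩
  | succ t ih =>
    intro N hN
    suffices H : ∀ e : ℕ, ∀ g ∈ MvPolynomial.supported k (Sle N), MvPolynomial.degreeOf N g ≤ e →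
        ∃ (n : ℕ) (r : MvPolynomial ℕ+ k), r ∈ MvPolynomial.supported k (Sle p) ∧
          (MvPolynomial.pderiv p f)^n * g - r
            ∈ Ideal.span (Set.range fun j => (fun g => B (X 1) g)^[j] f) by
      intro g hg
      exact H (MvPolynomial.degreeOf N g) g hg le_rfl
    have hcase0 : ∀ g ∈ MvPolynomial.supported k (Sle N), MvPolynomial.degreeOf N g = 0 →
        ∃ (n : ℕ) (r : MvPolynomial ℕ+ k), r ∈ MvPolynomial.supported k (Sle p) ∧
          (MvPolynomial.pderiv p f)^n * g - r
            ∈ Ideal.span (Set.range fun j => (fun g => B (X 1) g)^[j] f) := by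
      intro g hg h0
      set N' : ℕ+ := ((p:ℕ) + t).toPNat' with hN'def
      have hN' : (N':ℕ) = (p:ℕ) + t := by
        rw [hN'def, Nat.toPNat'_coe, if_pos (by omega)]
      refine ih N' hN' g ?_
      rw [MvPolynomial.mem_supported] at hg ⊢
      intro i hi
      have hiN : i ≤ N := hg hi
      have hine : i ≠ N := by
        intro hiN2
        subst hiN2
        rw [Finset.mem_coe] at hi
        exact ((mem_vars_iff_degreeOf_ne_zero g i).1 hi) h0
      have h1 : (i:ℕ) ≤ (N:ℕ) := (PNat.coe_le_coe _ _).2 hiN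
      have h2 : (i:ℕ) ≠ (N:ℕ) := fun hc => hine (PNat.coe_injective hc)
      refine mem_Sle.2 ((PNat.coe_le_coe _ _).1 ?_)
      omega
    intro e
    induction e with
    | zero =>
      intro g hg hdeg
      exact hcase0 g hg (Nat.le_zero.1 hdeg)
    | succ e ihe =>
      intro g hg hdeg
      by_cases h0 : MvPolynomial.degreeOf N g = 0
      · exact hcase0 g hg h0
      -- decompose g
      obtain ⟨q, g₀, hgeq, hqdeg, hg₀deg, hqvars, hg₀vars⟩ := decomp_variable N g h0
      obtain ⟨c, N₂, T, hc, hN₂, hT, hKeq⟩ := Klemma B hB hgen p hp hf t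
      have hNN : N₂ + 1 = N := by
        refine PNat.coe_injective ?_
        rw [PNat.add_coe, PNat.one_coe]
        omega
      rw [hNN] at hKeq
      set S := MvPolynomial.pderiv p f with hSdef
      set g' := MvPolynomial.C c * (S * g₀) - T * q with hg'def
      have hpN : (p:ℕ+) ≤ N := (PNat.coe_le_coe _ _).1 (by omega)
      have hSmem : S ∈ MvPolynomial.supported k (Sle N) :=
        MvPolynomial.supported_mono (Sle_mono hpN) (pderiv_mem_supported p hf)
      have hqmem : q ∈ MvPolynomial.supported k (Sle N) := by
        rw [MvPolynomial.mem_supported] at hg ⊢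
        exact Set.Subset.trans (Finset.coe_subset.2 hqvars) hg
      have hg₀mem : g₀ ∈ MvPolynomial.supported k (Sle N) := by
        rw [MvPolynomial.mem_supported] at hg ⊢
        exact Set.Subset.trans (Finset.coe_subset.2 hg₀vars) hg
      have hTmem : T ∈ MvPolynomial.supported k (Sle N) := by
        refine MvPolynomial.supported_mono (Sle_mono ?_) hT
        rw [← hNN]
        refine (PNat.coe_le_coe _ _).1 ?_
        rw [PNat.add_coe, PNat.one_coe]
        omega
      have hg'mem : g' ∈ MvPolynomial.supported k (Sle N) := by
        refine Subalgebra.sub_mem _ ?_ (Subalgebra.mul_mem _ hTmem hqmem)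
        exact Subalgebra.mul_mem _ (Subalgebra.algebraMap_mem _ _)
          (Subalgebra.mul_mem _ hSmem hg₀mem)
      -- degree bound
      have hdegS : MvPolynomial.degreeOf N S = 0 := by
        refine degreeOf_eq_zero_of_not_mem_vars ?_
        intro hmem
        have := (MvPolynomial.mem_supported).1 (pderiv_mem_supported (f := f) p hf) hmem
        have := (PNat.coe_le_coe _ _).2 (mem_Sle.1 this)
        omega
      have hdegT : MvPolynomial.degreeOf N T = 0 := by
        refine degreeOf_eq_zero_of_not_mem_vars ?_
        intro hmem
        have := (MvPolynomial.mem_supported).1 hT hmem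
        have := (PNat.coe_le_coe _ _).2 (mem_Sle.1 this)
        omega
      have hg'deg : MvPolynomial.degreeOf N g' ≤ e := by
        have h1 : MvPolynomial.degreeOf N (MvPolynomial.C c * (S * g₀))
            ≤ MvPolynomial.degreeOf N (MvPolynomial.C c)
              + (MvPolynomial.degreeOf N S + MvPolynomial.degreeOf N g₀) :=
          le_trans (MvPolynomial.degreeOf_mul_le _ _ _)
            (Nat.add_le_add_left (MvPolynomial.degreeOf_mul_le _ _ _) _)
        rw [MvPolynomial.degreeOf_C, hdegS, hg₀deg] at h1
        have h2 : MvPolynomial.degreeOf N (T * q)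
            ≤ MvPolynomial.degreeOf N T + MvPolynomial.degreeOf N q :=
          MvPolynomial.degreeOf_mul_le _ _ _
        rw [hdegT] at h2
        have h3 := MvPolynomial.degreeOf_add_le N
          (MvPolynomial.C c * (S * g₀)) (-(T * q))
        rw [← sub_eq_add_neg, MvPolynomial.degreeOf_neg] at h3
        rw [hg'def]
        exact le_trans h3 (sup_le (by omega) (by omega))
      obtain ⟨n', r', hr'mem, hr'span⟩ := ihe g' hg'mem hg'deg
      -- main identity
      have hmain : MvPolynomial.C c * (S^(n'+1) * g) - r'
          = (S^n' * q) * ((fun g => B (X 1) g)^[t+1] f) + (S^n' * g' - r') := by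
        rw [hKeq, hgeq, hg'def]
        ring
      have hmainmem : MvPolynomial.C c * (S^(n'+1) * g) - r'
          ∈ Ideal.span (Set.range fun j => (fun g => B (X 1) g)^[j] f) := by
        rw [hmain]
        refine Ideal.add_mem _ ?_ hr'span
        exact Ideal.mul_mem_left _ _ (Ideal.subset_span ⟨t+1, rfl⟩)
      refine ⟨n'+1, MvPolynomial.C c⁻¹ * r',
        Subalgebra.mul_mem _ (Subalgebra.algebraMap_mem _ _) hr'mem, ?_⟩
      have hCinv : MvPolynomial.C (c⁻¹) * MvPolynomial.C c = (1 : MvPolynomial ℕ+ k) := by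
        rw [← map_mul, inv_mul_cancel₀ hc, map_one]
      have heq2 : S^(n'+1) * g - MvPolynomial.C c⁻¹ * r'
          = MvPolynomial.C c⁻¹ * (MvPolynomial.C c * (S^(n'+1) * g) - r') := by
        rw [mul_sub, ← mul_assoc, hCinv, one_mul]
      rw [heq2]
      exact Ideal.mul_mem_left _ _ hmainmem

lemma elim (p : ℕ+) (hp : (2:ℕ) ≤ (p:ℕ)) {f : MvPolynomial ℕ+ k}
    (hf : f ∈ MvPolynomial.supported k (Sle p)) (g : MvPolynomial ℕ+ k) :
    ∃ (n : ℕ) (r : MvPolynomial ℕ+ k), r ∈ MvPolynomial.supported k (Sle p) ∧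
      (MvPolynomial.pderiv p f)^n * g - r
        ∈ Ideal.span (Set.range fun j => (fun g => B (X 1) g)^[j] f) := by
  set t := g.vars.sup (fun i => (i:ℕ)) with ht
  set N : ℕ+ := ((p:ℕ) + t).toPNat' with hNdef
  have hN : (N:ℕ) = (p:ℕ) + t := by
    rw [hNdef, Nat.toPNat'_coe, if_pos (by omega)]
  refine elim_aux B hB hgen p hp hf t N hN g ?_
  rw [MvPolynomial.mem_supported]
  intro i hi
  rw [Finset.mem_coe] at hi
  have : (i:ℕ) ≤ t := Finset.le_sup (f := fun i : ℕ+ => (i:ℕ)) hi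
  refine mem_Sle.2 ((PNat.coe_le_coe _ _).1 ?_)
  omega

end Bracket2
section Bracket3
open MvPolynomial

variable {k : Type*} [Field k] [CharZero k]
variable (B : MvPolynomial ℕ+ k → MvPolynomial ℕ+ k → MvPolynomial ℕ+ k)
variable (hB : IsPoissonBracket k B)
variable (hgen : ∀ i j : ℕ+,
      B (X i) (X j) = (((j : ℕ) : ℤ) - ((i : ℕ) : ℤ)) • (X (i + j) : MvPolynomial ℕ+ k))

include hB hgen

lemma xchain (J : Ideal (MvPolynomial ℕ+ k)) (hJp : IsPoissonIdeal B J)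
    (h3 : X (3:ℕ+) ∈ J) : ∀ i : ℕ+, (3:ℕ) ≤ (i:ℕ) → X i ∈ J := by
  have key : ∀ m : ℕ, X (((3:ℕ) + m).toPNat') ∈ J := by
    intro m
    induction m with
    | zero =>
      have : ((3:ℕ) + 0).toPNat' = (3:ℕ+) := by
        refine PNat.coe_injective ?_
        rw [Nat.toPNat'_coe, if_pos (by omega)]
        decide
      rwa [this]
    | succ m ih =>
      set n : ℕ+ := ((3:ℕ) + m).toPNat' with hndef
      have hn : (n:ℕ) = 3 + m := by rw [hndef, Nat.toPNat'_coe, if_pos (by omega)]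
      have hD : B (X 1) (X n) ∈ J := hJp (X 1) _ ih
      rw [D_X B hB hgen n] at hD
      have hc : (((n:ℕ):k) - 1) ≠ 0 := by
        intro hc0
        rw [sub_eq_zero] at hc0
        have : (n:ℕ) = 1 := by exact_mod_cast hc0
        omega
      have hX : (X (n+1) : MvPolynomial ℕ+ k)
          = MvPolynomial.C (((n:ℕ):k) - 1)⁻¹
            * (MvPolynomial.C (((n:ℕ):k) - 1) * X (n+1)) := by
        rw [← mul_assoc, ← map_mul, inv_mul_cancel₀ hc, map_one, one_mul]
      have hmem : X (n+1) ∈ J := by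
        rw [hX]
        exact Ideal.mul_mem_left _ _ hD
      have heq : ((3:ℕ) + (m+1)).toPNat' = n + 1 := by
        refine PNat.coe_injective ?_
        rw [Nat.toPNat'_coe, if_pos (by omega), PNat.add_coe, PNat.one_coe, hn]
        omega
      rwa [heq]
  intro i hi
  have : i = ((3:ℕ) + ((i:ℕ) - 3)).toPNat' := by
    refine PNat.coe_injective ?_
    rw [Nat.toPNat'_coe, if_pos (by omega)]
    omega
  rw [this]
  exact key _

lemma CR1 {f : MvPolynomial ℕ+ k} (hf : f ∈ MvPolynomial.supported k (Sle 1)) :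
    B (X 2) f = MvPolynomial.pderiv 1 f * B (X 2) (X 1) := by
  rw [MvPolynomial.supported_eq_adjoin_X] at hf
  induction hf using Algebra.adjoin_induction with
  | mem x hx =>
    obtain ⟨i, hi, rfl⟩ := hx
    have hi1 : i = 1 := PNat.le_one_iff.1 (mem_Sle.1 hi)
    subst hi1
    rw [MvPolynomial.pderiv_X_self, one_mul]
  | algebraMap r =>
    rw [MvPolynomial.algebraMap_eq, b_C_right B hB, MvPolynomial.pderiv_C, zero_mul]
  | add x y hx hy ihx ihy =>
    have : B (X 2) (x + y) = B (X 2) x + B (X 2) y := b_add_right B hB _ _ _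
    rw [this, map_add, ihx, ihy]
    ring
  | mul x y hx hy ihx ihy =>
    rw [hB.2.2.2.2 (X 2) x y, MvPolynomial.pderiv_mul, ihx, ihy]
    ring

lemma b21 : B (X 2) (X 1) = - (X (3:ℕ+) : MvPolynomial ℕ+ k) := by
  have h := hgen 2 1
  have h21 : (2:ℕ+) + 1 = 3 := rfl
  rw [h21] at h
  rw [h]
  have : (((1:ℕ+):ℕ):ℤ) - (((2:ℕ+):ℕ):ℤ) = -1 := by decide
  rw [this]
  simp

omit hgen

lemma iterD_mem (J : Ideal (MvPolynomial ℕ+ k)) (hJp : IsPoissonIdeal B J)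
    {f : MvPolynomial ℕ+ k} (hf : f ∈ J) :
    ∀ j : ℕ, (fun g => B (X 1) g)^[j] f ∈ J := by
  intro j
  induction j with
  | zero => exact hf
  | succ j ih =>
    rw [Function.iterate_succ_apply']
    exact hJp (X 1) _ ih

end Bracket3

section ACCabstract

variable {k A : Type*} [CommRing k] [CommRing A] [Algebra k A]
variable (B : A → A → A)

lemma monotone_finset (c : ℕ → Ideal A) (hmono : Monotone c) (G : Finset A)
    (hG : ∀ g ∈ G, ∃ n, g ∈ c n) : ∃ N, ∀ g ∈ G, g ∈ c N := by
  classical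
  induction G using Finset.induction with
  | empty => exact ⟨0, by simp⟩
  | @insert a s ha ih =>
    obtain ⟨N, hN⟩ := ih (fun g hg => hG g (Finset.mem_insert_of_mem hg))
    obtain ⟨N', hN'⟩ := hG a (Finset.mem_insert_self a s)
    refine ⟨max N N', fun g hg => ?_⟩
    rcases Finset.mem_insert.1 hg with rfl | hg
    · exact hmono (le_max_right N N') hN'
    · exact hmono (le_max_left N N') (hN g hg)

lemma acc_of_all_fb (hfb : ∀ I : Ideal A, RP B I → FB B I) : PoissonRadicalACC B := by
  intro c hpois hrad hmono
  set U : Ideal A := ⨆ n, c n with hU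
  have hdir : Directed (· ≤ ·) c := hmono.directed_le
  have hmem : ∀ x : A, x ∈ U ↔ ∃ n, x ∈ c n := fun x =>
    Submodule.mem_iSup_of_directed c hdir
  have hUrp : RP B U := by
    constructor
    · intro x y hy
      obtain ⟨n, hn⟩ := (hmem y).1 hy
      exact (hmem _).2 ⟨n, hpois n x y hn⟩
    · rintro x ⟨m, hx⟩
      obtain ⟨n, hn⟩ := (hmem _).1 hx
      exact (hmem x).2 ⟨n, hrad n ⟨m, hn⟩⟩
  obtain ⟨G, hG⟩ := hfb U hUrp
  have hGmem : ∀ g ∈ G, ∃ n, g ∈ c n := by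
    intro g hg
    refine (hmem g).1 ?_
    rw [hG]
    exact subset_pc B _ hg
  obtain ⟨N, hN⟩ := monotone_finset c hmono G hGmem
  refine ⟨N, fun n hn => ?_⟩
  have h1 : c n ≤ U := le_iSup c n
  have h2 : U ≤ c N := by
    rw [hG]
    exact pc_le B ⟨hpois N, hrad N⟩ (fun g hg => hN g hg)
  exact le_antisymm (h1.trans h2) (hmono hn)

end ACCabstract
section Compact
variable {k A : Type*} [CommRing k] [CommRing A] [Algebra k A]
variable (B : A → A → A)

lemma compactness_finset (G : Finset A) (Y : Set A) (h : A)
    (hG : ∀ g ∈ G, g ∈ pc B (Y ∪ {h})) :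
    ∃ E : Finset A, ↑E ⊆ Y ∧ ∀ g ∈ G, g ∈ pc B (↑E ∪ {h}) := by
  classical
  induction G using Finset.induction with
  | empty => exact ⟨∅, by simp, by simp⟩
  | @insert a s ha ih =>
    obtain ⟨E1, hE1Y, hE1⟩ := ih (fun g hg => hG g (Finset.mem_insert_of_mem hg))
    obtain ⟨E2, hE2Y, hE2⟩ := mem_pc_union_singleton B (hG a (Finset.mem_insert_self a s))
    refine ⟨E1 ∪ E2, by
      rw [Finset.coe_union]
      exact Set.union_subset hE1Y hE2Y, ?_⟩
    intro g hg
    have hmono1 : pc B (↑E1 ∪ {h}) ≤ pc B (↑(E1 ∪ E2) ∪ {h}) := by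
      apply pc_mono
      rw [Finset.coe_union]
      exact Set.union_subset_union_left _ Set.subset_union_left
    have hmono2 : pc B (↑E2 ∪ {h}) ≤ pc B (↑(E1 ∪ E2) ∪ {h}) := by
      apply pc_mono
      rw [Finset.coe_union]
      exact Set.union_subset_union_left _ Set.subset_union_right
    rcases Finset.mem_insert.1 hg with rfl | hg
    · exact hmono2 hE2
    · exact hmono1 (hE1 g hg)

end Compact

section Main
open MvPolynomial

variable {k : Type*} [Field k] [CharZero k]
variable (B : MvPolynomial ℕ+ k → MvPolynomial ℕ+ k → MvPolynomial ℕ+ k)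
variable (hB : IsPoissonBracket k B)
variable (hgen : ∀ i j : ℕ+,
      B (X i) (X j) = (((j : ℕ) : ℤ) - ((i : ℕ) : ℤ)) • (X (i + j) : MvPolynomial ℕ+ k))

include hB hgen

theorem all_fb : ∀ I : Ideal (MvPolynomial ℕ+ k), RP B I → FB B I := by
  classical
  by_contra hcon
  push_neg at hcon
  obtain ⟨I₀, hI₀rp, hI₀bad⟩ := hcon
  obtain ⟨Q, ⟨hQrp, hQbad⟩, hQmax⟩ := exists_maximal_bad B ⟨I₀, hI₀rp, hI₀bad⟩
  have hprime : Q.IsPrime := maximal_bad_isPrime B hB Q hQrp hQbad hQmax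
  have hQne_top : Q ≠ ⊤ := hprime.ne_top
  -- helper : nonempty vars for non-Sle-1 polynomials
  have hldr : ∀ g : MvPolynomial ℕ+ k, g ∉ MvPolynomial.supported k (Sle 1) → g.vars.Nonempty := by
    intro g h
    by_contra hemp
    rw [Finset.not_nonempty_iff_eq_empty] at hemp
    apply h
    rw [MvPolynomial.mem_supported, hemp]
    simp
  by_cases hcase : ∃ π : MvPolynomial ℕ+ k,
      π ∈ Q ∧ π ∈ MvPolynomial.supported k (Sle 1) ∧ π ≠ 0
  · -- Case B : Q contains a nonzero polynomial in x₁ alone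
    set E : Set ℕ := {n : ℕ | ∃ π : MvPolynomial ℕ+ k,
      π ∈ Q ∧ π ∈ MvPolynomial.supported k (Sle 1) ∧ π ≠ 0 ∧ MvPolynomial.degreeOf 1 π = n}
      with hEdef
    have hEne : E.Nonempty := by
      obtain ⟨π, h1, h2, h3⟩ := hcase
      exact ⟨MvPolynomial.degreeOf 1 π, π, h1, h2, h3, rfl⟩
    obtain ⟨π, hπQ, hπsup, hπne, hπdeg⟩ := Nat.sInf_mem hEne
    by_cases hd0 : MvPolynomial.degreeOf 1 π = 0
    · -- π is a nonzero constant : Q = ⊤, contradiction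
      have hvars : π.vars = ∅ := by
        rw [Finset.eq_empty_iff_forall_notMem]
        intro i hi
        have hle : i ≤ (1:ℕ+) := mem_Sle.1 ((MvPolynomial.mem_supported).1 hπsup hi)
        have : i = 1 := PNat.le_one_iff.1 hle
        subst this
        exact (mem_vars_iff_degreeOf_ne_zero π 1).1 hi hd0
      obtain ⟨a, rfl⟩ := eq_C_of_vars_empty π hvars
      have hane : a ≠ 0 := by
        intro h
        rw [h, map_zero] at hπne
        exact hπne rfl
      have h1 : (1 : MvPolynomial ℕ+ k) ∈ Q := by
        have : (1 : MvPolynomial ℕ+ k) = MvPolynomial.C a⁻¹ * MvPolynomial.C a := by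
          rw [← map_mul, inv_mul_cancel₀ hane, map_one]
        rw [this]
        exact Ideal.mul_mem_left _ _ hπQ
      exact hQne_top ((Ideal.eq_top_iff_one Q).2 h1)
    · -- derivative argument : X 3 ∈ Q
      set π' := MvPolynomial.pderiv 1 π with hπ'def
      have hπ'ne : π' ≠ 0 := pderiv_ne_zero hd0
      have hπ'sup : π' ∈ MvPolynomial.supported k (Sle 1) := pderiv_mem_supported 1 hπsup
      have hπ'deg : MvPolynomial.degreeOf 1 π' < MvPolynomial.degreeOf 1 π :=
        degreeOf_pderiv_lt hd0
      have hπ'Q : π' ∉ Q := by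
        intro h
        have : MvPolynomial.degreeOf 1 π' ∈ E := ⟨π', h, hπ'sup, hπ'ne, rfl⟩
        have := Nat.sInf_le this
        omega
      have hD2 : B (X 2) π ∈ Q := hQrp.1 (X 2) π hπQ
      rw [CR1 B hB hgen hπsup, b21 B hB hgen] at hD2
      have hD2' : π' * X (3:ℕ+) ∈ Q := by
        have : π' * X (3:ℕ+) = -(π' * -X (3:ℕ+)) := by ring
        rw [this]
        exact neg_mem hD2
      have hX3 : X (3:ℕ+) ∈ Q := (hprime.mem_or_mem hD2').resolve_left hπ'Q
      obtain ⟨C₀, hC₀Q, hC₀span⟩ := fg_cut Q 2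
      apply hQbad
      refine ⟨C₀ ∪ {X (3:ℕ+)}, ?_⟩
      have hcoe : (↑(C₀ ∪ {X (3:ℕ+)}) : Set (MvPolynomial ℕ+ k))
          = ↑C₀ ∪ {X (3:ℕ+)} := by simp
      rw [hcoe]
      have hXQ : ∀ i : ℕ+, ¬ i ≤ (2:ℕ+) → X i ∈ Q := by
        intro i hi
        refine xchain B hB hgen Q hQrp.1 hX3 i ?_
        have : ¬ (i:ℕ) ≤ ((2:ℕ+):ℕ) := fun h => hi ((PNat.coe_le_coe _ _).1 h)
        have h2 : ((2:ℕ+):ℕ) = 2 := rfl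
        omega
      have hXpc : ∀ i : ℕ+, ¬ i ≤ (2:ℕ+) → X i ∈ pc B (↑C₀ ∪ {X (3:ℕ+)}) := by
        intro i hi
        refine xchain B hB hgen _ (RP_pc B _).1 (subset_pc B _ (Or.inr rfl)) i ?_
        have : ¬ (i:ℕ) ≤ ((2:ℕ+):ℕ) := fun h => hi ((PNat.coe_le_coe _ _).1 h)
        have h2 : ((2:ℕ+):ℕ) = 2 := rfl
        omega
      apply le_antisymm
      · intro g hgQ
        obtain ⟨g₀, hg₀sup, hg₀span⟩ := split_ge3 g
        have hspanQ : Ideal.span {x : MvPolynomial ℕ+ k | ∃ i : ℕ+, ¬ i ≤ (2:ℕ+) ∧ x = X i} ≤ Q := by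
          rw [Ideal.span_le]
          rintro x ⟨i, hi, rfl⟩
          exact hXQ i hi
        have hspanpc : Ideal.span {x : MvPolynomial ℕ+ k | ∃ i : ℕ+, ¬ i ≤ (2:ℕ+) ∧ x = X i}
            ≤ pc B (↑C₀ ∪ {X (3:ℕ+)}) := by
          rw [Ideal.span_le]
          rintro x ⟨i, hi, rfl⟩
          exact hXpc i hi
        have hg₀Q : g₀ ∈ Q := by
          have h1 : g - g₀ ∈ Q := hspanQ hg₀span
          have : g₀ = g - (g - g₀) := by ring
          rw [this]
          exact Ideal.sub_mem _ hgQ h1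
        have hg₀pc : g₀ ∈ pc B (↑C₀ ∪ {X (3:ℕ+)}) := by
          have h1 : g₀ ∈ Ideal.span (↑C₀ : Set (MvPolynomial ℕ+ k)) := hC₀span g₀ hg₀Q hg₀sup
          have h2 : Ideal.span (↑C₀ : Set (MvPolynomial ℕ+ k)) ≤ pc B (↑C₀ ∪ {X (3:ℕ+)}) := by
            rw [Ideal.span_le]
            exact fun x hx => subset_pc B _ (Or.inl hx)
          exact h2 h1
        have : g = g₀ + (g - g₀) := by ring
        rw [this]
        exact Ideal.add_mem _ hg₀pc (hspanpc hg₀span)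
      · refine pc_le B hQrp ?_
        rintro x (hx | hx)
        · exact hC₀Q hx
        · rw [Set.mem_singleton_iff] at hx
          rw [hx]
          exact hX3
  · -- Case A : no nonzero element of Q lies in k[x₁]
    push_neg at hcase
    have hA : ∀ g ∈ Q, g ∈ MvPolynomial.supported k (Sle 1) → g = 0 := by
      intro g h1 h2
      exact hcase g h1 h2
    have hQne_bot : Q ≠ ⊥ := by
      intro h
      rw [h] at hQbad
      exact hQbad (FB_bot B hB)
    obtain ⟨q, hqQ, hqne⟩ := Submodule.exists_mem_ne_zero_of_ne_bot hQne_bot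
    have hqsup : q ∉ MvPolynomial.supported k (Sle 1) := fun h => hqne (hA q hqQ h)
    -- minimal leader
    set NE1 : Set ℕ := {n : ℕ | ∃ g : MvPolynomial ℕ+ k,
      ∃ (_ : g ∈ Q) (hg2 : g ∉ MvPolynomial.supported k (Sle 1)),
        ((g.vars.max' (hldr g hg2) : ℕ+) : ℕ) = n} with hNE1def
    have hNE1ne : NE1.Nonempty := ⟨_, q, hqQ, hqsup, rfl⟩
    set P := sInf NE1 with hPdef
    -- minimal degree among leaders P
    set NE2 : Set ℕ := {e : ℕ | ∃ g : MvPolynomial ℕ+ k,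
      ∃ (_ : g ∈ Q) (hg2 : g ∉ MvPolynomial.supported k (Sle 1)),
        ((g.vars.max' (hldr g hg2) : ℕ+) : ℕ) = P ∧
        MvPolynomial.degreeOf (g.vars.max' (hldr g hg2)) g = e} with hNE2def
    have hNE2ne : NE2.Nonempty := by
      obtain ⟨g₁, hg₁Q, hg₁ns, hg₁ldr⟩ := Nat.sInf_mem hNE1ne
      exact ⟨_, g₁, hg₁Q, hg₁ns, hg₁ldr, rfl⟩
    obtain ⟨f, hfQ, hfns, hfP, hfd⟩ := Nat.sInf_mem hNE2ne
    set p : ℕ+ := f.vars.max' (hldr f hfns) with hpdef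
    have hpmem : p ∈ f.vars := f.vars.max'_mem _
    have hple : ∀ i ∈ f.vars, i ≤ p := fun i hi => f.vars.le_max' i hi
    have hfsup : f ∈ MvPolynomial.supported k (Sle p) := by
      rw [MvPolynomial.mem_supported]
      intro i hi
      rw [Finset.mem_coe] at hi
      exact mem_Sle.2 (hple i hi)
    have hp2 : (2:ℕ) ≤ (p:ℕ) := by
      have : ¬ (↑f.vars : Set ℕ+) ⊆ Sle 1 := fun h =>
        hfns ((MvPolynomial.mem_supported).2 h)
      rw [Set.not_subset] at this
      obtain ⟨i, hi, hile⟩ := this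
      rw [Finset.mem_coe] at hi
      have h1 : ¬ i ≤ (1:ℕ+) := hile
      have h2 : i ≤ p := hple i hi
      have h3 : ¬ (i:ℕ) ≤ 1 := by
        intro h
        exact h1 ((PNat.coe_le_coe i 1).1 (by rw [PNat.one_coe]; exact h))
      have h4 : (i:ℕ) ≤ (p:ℕ) := (PNat.coe_le_coe _ _).2 h2
      omega
    have hdne : MvPolynomial.degreeOf p f ≠ 0 :=
      (mem_vars_iff_degreeOf_ne_zero f p).1 hpmem
    set S := MvPolynomial.pderiv p f with hSdef
    have hSne : S ≠ 0 := pderiv_ne_zero hdne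
    have hSnotQ : S ∉ Q := by
      intro hSQ
      by_cases hSsup : S ∈ MvPolynomial.supported k (Sle 1)
      · exact hSne (hA S hSQ hSsup)
      · set pS : ℕ+ := S.vars.max' (hldr S hSsup) with hpSdef
        have h1 : ((pS : ℕ+) : ℕ) ∈ NE1 := ⟨S, hSQ, hSsup, rfl⟩
        have h2 : P ≤ (pS:ℕ) := Nat.sInf_le h1
        have h3 : pS ≤ p := by
          refine hple pS ?_
          exact vars_pderiv_subset p f (S.vars.max'_mem _)
        have h4 : (pS:ℕ) = P := by
          have := (PNat.coe_le_coe _ _).2 h3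
          omega
        have hpSp : pS = p := PNat.coe_injective (by omega)
        have h5 : MvPolynomial.degreeOf pS S ∈ NE2 := ⟨S, hSQ, hSsup, h4, rfl⟩
        have h6 := Nat.sInf_le h5
        rw [hpSp] at h6
        have h7 : MvPolynomial.degreeOf p S < MvPolynomial.degreeOf p f :=
          degreeOf_pderiv_lt hdne
        omega
    obtain ⟨C₀, hC₀Q, hC₀span⟩ := fg_cut Q p
    set Jf : Ideal (MvPolynomial ℕ+ k) :=
      Ideal.span (Set.range fun j => (fun g => B (X 1) g)^[j] f) with hJfdef
    set Cset : Set (MvPolynomial ℕ+ k) := ↑C₀ ∪ {f} with hCsetdef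
    have hJfQ : Jf ≤ Q := by
      rw [hJfdef, Ideal.span_le]
      rintro x ⟨j, rfl⟩
      exact iterD_mem B hB Q hQrp.1 hfQ j
    have hJfpc : Jf ≤ pc B Cset := by
      rw [hJfdef, Ideal.span_le]
      rintro x ⟨j, rfl⟩
      exact iterD_mem B hB _ (RP_pc B _).1 (subset_pc B _ (Or.inr rfl)) j
    have hC₀pc : Ideal.span (↑C₀ : Set (MvPolynomial ℕ+ k)) ≤ pc B Cset := by
      rw [Ideal.span_le]
      exact fun x hx => subset_pc B _ (Or.inl hx)
    have hSQmul : ∀ g ∈ Q, S * g ∈ pc B Cset := by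
      intro g hgQ
      obtain ⟨n, r, hrsup, hrJ⟩ := elim B hB hgen p hp2 hfsup g
      have hSngQ : S^n * g ∈ Q := Ideal.mul_mem_left _ _ hgQ
      have hrQ : r ∈ Q := by
        have h1 : S^n * g - r ∈ Q := hJfQ hrJ
        have : r = S^n * g - (S^n * g - r) := by ring
        rw [this]
        exact Ideal.sub_mem _ hSngQ h1
      have hrpc : r ∈ pc B Cset := hC₀pc (hC₀span r hrQ hrsup)
      have hSng : S^n * g ∈ pc B Cset := by
        have h1 : S^n * g - r ∈ pc B Cset := hJfpc hrJ
        have : S^n * g = (S^n * g - r) + r := by ring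
        rw [this]
        exact Ideal.add_mem _ h1 hrpc
      rcases n with _ | n
      · rw [pow_zero, one_mul] at hSng
        exact Ideal.mul_mem_left _ _ hSng
      · have hpow : (S * g)^(n+1) ∈ pc B Cset := by
          have : (S * g)^(n+1) = (S^(n+1) * g) * g^n := by ring
          rw [this]
          exact Ideal.mul_mem_right _ _ hSng
        exact (RP_pc B Cset).2 ⟨n+1, hpow⟩
    have hQS : Q < pc B (↑Q ∪ {S}) := by
      refine lt_of_le_of_ne
        (le_trans (pc_eq_self B hQrp).ge (pc_mono B Set.subset_union_left)) ?_
      intro h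
      exact hSnotQ (h ▸ subset_pc B _ (Or.inr rfl))
    obtain ⟨G, hG⟩ := hQmax _ (RP_pc B _) hQS
    have hGpc : ∀ g ∈ G, g ∈ pc B (↑Q ∪ {S}) := by
      intro g hg
      rw [hG]
      exact subset_pc B _ hg
    obtain ⟨Bf, hBfQ, hBfall⟩ := compactness_finset B G ↑Q S hGpc
    have hpcEq : pc B (↑Q ∪ {S}) = pc B (↑Bf ∪ {S}) := by
      apply le_antisymm
      · rw [hG]
        exact pc_le B (RP_pc B _) (fun g hg => hBfall g hg)
      · exact pc_mono B (Set.union_subset_union_left _ hBfQ)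
    apply hQbad
    refine ⟨Bf ∪ (C₀ ∪ {f}), ?_⟩
    have hcoe : (↑(Bf ∪ (C₀ ∪ {f})) : Set (MvPolynomial ℕ+ k)) = ↑Bf ∪ Cset := by
      rw [hCsetdef]
      simp
    rw [hcoe]
    apply le_antisymm
    · intro g hgQ
      have hgin : g ∈ pc B (↑Bf ∪ {S}) := by
        rw [← hpcEq]
        exact subset_pc B _ (Or.inl hgQ)
      have hsq : g * g ∈ pc B ((g * ·) '' (↑Bf ∪ {S})) := pc_mul B hB g hgin
      have hle : pc B ((g * ·) '' (↑Bf ∪ {S})) ≤ pc B (↑Bf ∪ Cset) := by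
        refine pc_le B (RP_pc B _) ?_
        rintro x ⟨y, hy, rfl⟩
        rcases hy with hy | hy
        · have : y ∈ pc B (↑Bf ∪ Cset) := subset_pc B _ (Or.inl hy)
          exact Ideal.mul_mem_left _ _ this
        · rw [Set.mem_singleton_iff] at hy
          subst hy
          have h1 : S * g ∈ pc B Cset := hSQmul g hgQ
          have h2 : pc B Cset ≤ pc B (↑Bf ∪ Cset) := pc_mono B Set.subset_union_right
          show (fun x => g * x) S ∈ _
          simp only []
          rw [mul_comm]
          exact h2 h1
      exact mem_pc_sq B (hle hsq)
    · refine pc_le B hQrp ?_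
      rintro x (hx | hx)
      · exact hBfQ hx
      · rcases hx with hx | hx
        · exact hC₀Q hx
        · rw [Set.mem_singleton_iff] at hx
          rw [hx]
          exact hfQ

theorem symmetricAlgebraWittPlus_poissonRadicalACC' : PoissonRadicalACC B :=
  acc_of_all_fb B (all_fb B hB hgen)

end Main


/-- Let `k` be a field of characteristic zero and let
`A = k[x₁, x₂, x₃, …]` be the polynomial algebra in variables `xᵢ = X i` indexed by the
positive integers, i.e. the symmetric algebra of the positive Witt algebra `W₊`, endowed with
its Poisson bracket determined by `{xᵢ, xⱼ} = (j - i)·x_{i+j}`.  Then `A` satisfies the ACC on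
radical Poisson ideals. -/
theorem symmetricAlgebraWittPlus_poissonRadicalACC
    {k : Type*} [Field k] [CharZero k]
    (B : MvPolynomial ℕ+ k → MvPolynomial ℕ+ k → MvPolynomial ℕ+ k)
    (hB : IsPoissonBracket k B)
    (hgen : ∀ i j : ℕ+,
      B (X i) (X j) = (((j : ℕ) : ℤ) - ((i : ℕ) : ℤ)) • (X (i + j) : MvPolynomial ℕ+ k)) :
    PoissonRadicalACC B :=
  acc_of_all_fb B (all_fb B hB hgen)
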